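/- Stuttering property: if μ ⟹ μ̄, μ̄ ⟹ ν and μ ≈_b ν, then μ ≈_b μ̄. -/

import Mathlib

open scoped BigOperators
open Classical

namespace PBB

structure Distr (X : Type) where
  f : X → ℝ
  nonneg : ∀ x, 0 ≤ f x
  fin : (Function.support f).Finite
  sum_one : ∑ᶠ x, f x = 1

namespace Distr

variable {X : Type}

noncomputable def dirac (E : X) : Distr X where
  f := fun x => if x = E then 1 else 0
  nonneg := fun x => by by_cases h : x = E <;> simp [h]
  fin := Set.Finite.subset (Set.finite_singleton E) (by
    intro x hx
    simp only [Function.mem_support] at hx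
    by_contra h
    simp only [Set.mem_singleton_iff] at h
    simp [h] at hx)
  sum_one := by
    rw [finsum_eq_single _ E (by intro x hx; simp [hx])]
    simp

noncomputable def mix (r : ℝ) (h0 : 0 ≤ r) (h1 : r ≤ 1) (μ ν : Distr X) : Distr X where
  f := fun x => r * μ.f x + (1 - r) * ν.f x
  nonneg := fun x =>
    add_nonneg (mul_nonneg h0 (μ.nonneg x)) (mul_nonneg (by linarith) (ν.nonneg x))
  fin := Set.Finite.subset (μ.fin.union ν.fin) (by
    intro x hx
    simp only [Function.mem_support] at hx
    by_contra h
    simp only [Set.mem_union, Function.mem_support, not_or, not_not] at h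
    simp [h.1, h.2] at hx)
  sum_one := by
    have hf : (Function.support fun x => r * μ.f x).Finite :=
      Set.Finite.subset μ.fin (by
        intro x hx
        simp only [Function.mem_support] at hx ⊢
        intro h; simp [h] at hx)
    have hg : (Function.support fun x => (1 - r) * ν.f x).Finite :=
      Set.Finite.subset ν.fin (by
        intro x hx
        simp only [Function.mem_support] at hx ⊢
        intro h; simp [h] at hx)
    rw [finsum_add_distrib hf hg, ← mul_finsum μ.f r, ← mul_finsum ν.f (1 - r),
      μ.sum_one, ν.sum_one]
    ring

end Distr

def IsMix {X : Type} (r : ℝ) (μ ν ξ : Distr X) : Prop :=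
  ∀ x, ξ.f x = r * μ.f x + (1 - r) * ν.f x

def IsCombo {X I : Type} [Fintype I] (p : I → ℝ) (μs : I → Distr X) (ξ : Distr X) : Prop :=
  (∀ i, 0 ≤ p i) ∧ (∑ i, p i = 1) ∧ ∀ x, ξ.f x = ∑ i, p i * (μs i).f x

/-! ### The probabilistic process calculus -/

mutual
/-- Non-deterministic processes: `E ::= 0 | α.P | E + E`. -/
inductive PE (Act : Type) : Type where
  | zero : PE Act
  | pre : Act → PP Act → PE Act
  | plus : PE Act → PE Act → PE Act

/-- Probabilistic processes: `P ::= ∂(E) | P ⊕_r P` with `r ∈ (0,1)`. -/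
inductive PP (Act : Type) : Type where
  | dirac : PE Act → PP Act
  | pchoice : PP Act → (r : ℝ) → 0 < r → r < 1 → PP Act → PP Act
end

variable {Act : Type}

/-- The distribution `⟦P⟧` denoted by a probabilistic process. -/
noncomputable def den : PP Act → Distr (PE Act)
  | .dirac E => Distr.dirac E
  | .pchoice P r h0 h1 Q => Distr.mix r h0.le h1.le (den P) (den Q)

/-- The transition relation `E →α μ` on non-deterministic processes. -/
inductive pstep : PE Act → Act → Distr (PE Act) → Prop where
  | pre (α : Act) (P : PP Act) : pstep (.pre α P) α (den P)
  | left {E₁ E₂ : PE Act} {α : Act} {μ : Distr (PE Act)} :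
      pstep E₁ α μ → pstep (.plus E₁ E₂) α μ
  | right {E₁ E₂ : PE Act} {α : Act} {μ : Distr (PE Act)} :
      pstep E₂ α μ → pstep (.plus E₁ E₂) α μ

/-- The (combined) transition relation `μ →α μ'` on distributions. -/
def dstep (μ : Distr (PE Act)) (α : Act) (μ' : Distr (PE Act)) : Prop :=
  ∃ (I : Type) (_ : Fintype I) (p : I → ℝ) (Es : I → PE Act) (μs : I → Distr (PE Act)),
    IsCombo p (fun i => Distr.dirac (Es i)) μ ∧ IsCombo p μs μ' ∧
    ∀ i, pstep (Es i) α (μs i)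

variable (τ : Act)

/-- The partial silent step `μ →(τ) μ'`. -/
def ptau (μ μ' : Distr (PE Act)) : Prop :=
  dstep μ τ μ' ∨
  ∃ (s : ℝ) (μ₁ μ₂ μ₁' : Distr (PE Act)), 0 ≤ s ∧ s ≤ 1 ∧
    IsMix s μ₁ μ₂ μ ∧ IsMix s μ₁' μ₂ μ' ∧ dstep μ₁ τ μ₁'

/-- `μ ⟹ μ'`: the reflexive-transitive closure of `→(τ)`. -/
def wtau : Distr (PE Act) → Distr (PE Act) → Prop :=
  Relation.ReflTransGen (ptau τ)

/-- The optional step `μ →(α) μ'`. -/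
def optStep (μ : Distr (PE Act)) (α : Act) (μ' : Distr (PE Act)) : Prop :=
  dstep μ α μ' ∨ (α = τ ∧ ptau τ μ μ')

/-- Weak decomposability of a relation on distributions. -/
def WeaklyDecomposable (R : Distr (PE Act) → Distr (PE Act) → Prop) : Prop :=
  ∀ (I : Type) (_ : Fintype I) (p : I → ℝ) (μs : I → Distr (PE Act))
    (μ ν : Distr (PE Act)),
    R μ ν → IsCombo p μs μ →
    ∃ (ν' : Distr (PE Act)) (νs : I → Distr (PE Act)),
      wtau τ ν ν' ∧ R μ ν' ∧ IsCombo p νs ν' ∧ ∀ i, R (μs i) (νs i)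

/-- Decomposability of a relation on distributions. -/
def Decomposable (R : Distr (PE Act) → Distr (PE Act) → Prop) : Prop :=
  ∀ (I : Type) (_ : Fintype I) (p : I → ℝ) (μs : I → Distr (PE Act))
    (μ ν : Distr (PE Act)),
    R μ ν → IsCombo p μs μ →
    ∃ νs : I → Distr (PE Act), IsCombo p νs ν ∧ ∀ i, R (μs i) (νs i)

/-- Branching probabilistic bisimulation relations. -/
def IsBranchingBisim (R : Distr (PE Act) → Distr (PE Act) → Prop) : Prop :=
  Symmetric R ∧ WeaklyDecomposable τ R ∧
  ∀ μ ν α μ', R μ ν → dstep μ α μ' →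
    ∃ ν' ν'', wtau τ ν ν' ∧ optStep τ ν' α ν'' ∧ R μ ν' ∧ R μ' ν''

/-- Branching probabilistic bisimilarity `≈_b`. -/
def bb (μ ν : Distr (PE Act)) : Prop :=
  ∃ R, IsBranchingBisim τ R ∧ R μ ν

/-- Strong probabilistic bisimulation relations. -/
def IsStrongBisim (R : Distr (PE Act) → Distr (PE Act) → Prop) : Prop :=
  Symmetric R ∧ Decomposable R ∧
  ∀ μ ν α μ', R μ ν → dstep μ α μ' →
    ∃ ν', dstep ν α ν' ∧ R μ' ν'

/-- Strong probabilistic bisimilarity `∼`. -/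
def sb (μ ν : Distr (PE Act)) : Prop :=
  ∃ R, IsStrongBisim R ∧ R μ ν

/-- Rooted branching probabilistic bisimulation relations. -/
def IsRootedBranchingBisim (R : Distr (PE Act) → Distr (PE Act) → Prop) : Prop :=
  Symmetric R ∧ Decomposable R ∧
  ∀ μ ν α μ', R μ ν → dstep μ α μ' →
    ∃ ν', dstep ν α ν' ∧ bb τ μ' ν'

/-- Rooted branching probabilistic bisimilarity `≈_rb`. -/
def rbb (μ ν : Distr (PE Act)) : Prop :=
  ∃ R, IsRootedBranchingBisim τ R ∧ R μ ν

/-- `≈_b`-stability of a distribution. -/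
def Stable (μ : Distr (PE Act)) : Prop :=
  ∀ μ', wtau τ μ μ' → bb τ μ μ' → μ' = μ

/-- A state is rigid iff it admits no inert `τ`-transition. -/
def Rigid (E : PE Act) : Prop :=
  ¬ ∃ μ, pstep E τ μ ∧ bb τ (Distr.dirac E) μ

/-- `E ⊑ P`: every transition of `E` is matched by an optional transition of `⟦P⟧`
with branching probabilistically bisimilar target. -/
def sq (E : PE Act) (P : PP Act) : Prop :=
  ∀ α μ, pstep E α μ → ∃ ν, optStep τ (den P) α ν ∧ bb τ μ ν



private lemma bb_refl {Act : Type} (τ : Act) (μ : Distr (PE Act)) : bb τ μ μ := by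
  refine ⟨Eq, ⟨fun a b h => h.symm, ?_, ?_⟩, rfl⟩
  · intro I _ p μs μ ν h hc
    subst h
    exact ⟨μ, μs, Relation.ReflTransGen.refl, rfl, hc, fun i => rfl⟩
  · intro μ ν α μ' h hd
    subst h
    exact ⟨μ, μ', Relation.ReflTransGen.refl, Or.inl hd, rfl, rfl⟩

/-- Stuttering property. -/
theorem statement3 {Act : Type} (τ : Act) {μ μbar ν : Distr (PE Act)}
    (h1 : wtau τ μ μbar) (h2 : wtau τ μbar ν) (h : bb τ μ ν) :
    bb τ μ μbar := by
  set S : Distr (PE Act) → Distr (PE Act) → Prop :=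
    fun a b => wtau τ a b ∧ ∃ c, wtau τ b c ∧ bb τ a c with hS
  refine ⟨fun a b => bb τ a b ∨ S a b ∨ S b a, ⟨?_, ?_, ?_⟩,
    Or.inr (Or.inl ⟨h1, ν, h2, h⟩)⟩
  · -- symmetric
    rintro a b (⟨R, hB, hR⟩ | hs | hs)
    · exact Or.inl ⟨R, hB, hB.1 hR⟩
    · exact Or.inr (Or.inr hs)
    · exact Or.inr (Or.inl hs)
  · -- weakly decomposable
    rintro I inst p μs a b (⟨R, ⟨hsym, hwd, htr⟩, hR⟩ | ⟨hab, c, hbc, ⟨R, ⟨hsym, hwd, htr⟩, hR⟩⟩ | ⟨hba, c, hac, hbc⟩) hc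
    · obtain ⟨b', bs, hw, hR', hcb, hi⟩ := hwd I inst p μs a b hR hc
      exact ⟨b', bs, hw, Or.inl ⟨R, ⟨hsym, hwd, htr⟩, hR'⟩, hcb,
        fun i => Or.inl ⟨R, ⟨hsym, hwd, htr⟩, hi i⟩⟩
    · obtain ⟨c', cs, hw, hR', hcc, hi⟩ := hwd I inst p μs a c hR hc
      exact ⟨c', cs, hbc.trans hw, Or.inl ⟨R, ⟨hsym, hwd, htr⟩, hR'⟩, hcc,
        fun i => Or.inl ⟨R, ⟨hsym, hwd, htr⟩, hi i⟩⟩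
    · exact ⟨a, μs, hba, Or.inl (bb_refl τ a), hc, fun i => Or.inl (bb_refl τ _)⟩
  · -- transfer
    rintro a b α a' (⟨R, ⟨hsym, hwd, htr⟩, hR⟩ | ⟨hab, c, hbc, ⟨R, ⟨hsym, hwd, htr⟩, hR⟩⟩ | ⟨hba, c, hac, hbc⟩) hd
    · obtain ⟨b', b'', hw, hopt, hR1, hR2⟩ := htr a b α a' hR hd
      exact ⟨b', b'', hw, hopt, Or.inl ⟨R, ⟨hsym, hwd, htr⟩, hR1⟩,
        Or.inl ⟨R, ⟨hsym, hwd, htr⟩, hR2⟩⟩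
    · obtain ⟨c', c'', hw, hopt, hR1, hR2⟩ := htr a c α a' hR hd
      exact ⟨c', c'', hbc.trans hw, hopt, Or.inl ⟨R, ⟨hsym, hwd, htr⟩, hR1⟩,
        Or.inl ⟨R, ⟨hsym, hwd, htr⟩, hR2⟩⟩
    · exact ⟨a, a', hba, Or.inl hd, Or.inl (bb_refl τ a), Or.inl (bb_refl τ a')⟩

end PBB
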